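/- (Cheng) Let R, S, T be monads on a category C and let λ : TS ⇒ ST, σ : SR ⇒ RS, τ : TR ⇒ RT be distributive laws satisfying the Yang–Baxter equation σT ∘ Sτ ∘ λR = Rλ ∘ τS ∘ Tσ. Then: (1) Rλ ∘ τS : T(RS) ⇒ (RS)T is a distributive law of the composite monad R∘_σ S over T; (2) σT ∘ Sτ : (ST)R ⇒ R(ST) is a distributive law of R over the composite monad S∘_λ T; (3) the resulting monads (R∘_σ S)∘T and R∘(S∘_λ T) coincide: both have underlying functor RST, unit η^R η^S η^T, and the same multiplication. -/

import Mathlib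

open CategoryTheory

universe v u

/-- Raw monad data: an endofunctor together with unit and multiplication components
(the monad laws are not required). -/
structure MonadData (C : Type u) [Category.{v} C] where
  F : C ⥤ C
  unit : ∀ X : C, X ⟶ F.obj X
  mult : ∀ X : C, F.obj (F.obj X) ⟶ F.obj X

variable {C : Type u} [Category.{v} C]

/-- The data underlying a monad. -/
def CategoryTheory.Monad.data (T : Monad C) : MonadData C where
  F := T.toFunctor
  unit X := T.η.app X
  mult X := T.μ.app X

/-- The monad laws (two unitality axioms and associativity) for raw monad data. -/
def MonadData.IsMonad (A : MonadData C) : Prop :=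
  (∀ X : C, A.unit (A.F.obj X) ≫ A.mult X = 𝟙 (A.F.obj X)) ∧
  (∀ X : C, A.F.map (A.unit X) ≫ A.mult X = 𝟙 (A.F.obj X)) ∧
  (∀ X : C, A.F.map (A.mult X) ≫ A.mult X = A.mult (A.F.obj X) ≫ A.mult X)

/-- Axiom (η+) for a law `l : TS ⇒ ST` of the monad `A` (playing `S`) over `B` (playing `T`). -/
def EtaPlus (A B : MonadData C) (l : (A.F ⋙ B.F) ⟶ (B.F ⋙ A.F)) : Prop :=
  ∀ X : C, B.F.map (A.unit X) ≫ l.app X = A.unit (B.F.obj X)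

/-- Axiom (μ+): `λ ∘ Tμ^S = μ^S T ∘ Sλ ∘ λS`. -/
def MuPlus (A B : MonadData C) (l : (A.F ⋙ B.F) ⟶ (B.F ⋙ A.F)) : Prop :=
  ∀ X : C, B.F.map (A.mult X) ≫ l.app X =
    l.app (A.F.obj X) ≫ A.F.map (l.app X) ≫ A.mult (B.F.obj X)

/-- Axiom (η−): `λ ∘ η^T S = Sη^T`. -/
def EtaMinus (A B : MonadData C) (l : (A.F ⋙ B.F) ⟶ (B.F ⋙ A.F)) : Prop :=
  ∀ X : C, B.unit (A.F.obj X) ≫ l.app X = A.F.map (B.unit X)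

/-- Axiom (μ−): `λ ∘ μ^T S = Sμ^T ∘ λT ∘ Tλ`. -/
def MuMinus (A B : MonadData C) (l : (A.F ⋙ B.F) ⟶ (B.F ⋙ A.F)) : Prop :=
  ∀ X : C, B.mult (A.F.obj X) ≫ l.app X =
    B.F.map (l.app X) ≫ l.app (B.F.obj X) ≫ A.F.map (B.mult X)

/-- A weak distributive law satisfies (η+), (μ+) and (μ−). -/
def IsWDL (A B : MonadData C) (l : (A.F ⋙ B.F) ⟶ (B.F ⋙ A.F)) : Prop :=
  EtaPlus A B l ∧ MuPlus A B l ∧ MuMinus A B l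

/-- A distributive law satisfies all four axioms. -/
def IsDL (A B : MonadData C) (l : (A.F ⋙ B.F) ⟶ (B.F ⋙ A.F)) : Prop :=
  EtaPlus A B l ∧ MuPlus A B l ∧ EtaMinus A B l ∧ MuMinus A B l

/-- The natural family `κ := Sμ^T ∘ λT ∘ η^T ST : ST ⇒ ST` associated with a law. -/
def lawKappa (A B : MonadData C) (l : (A.F ⋙ B.F) ⟶ (B.F ⋙ A.F)) (X : C) :
    A.F.obj (B.F.obj X) ⟶ A.F.obj (B.F.obj X) :=
  B.unit (A.F.obj (B.F.obj X)) ≫ l.app (B.F.obj X) ≫ A.F.map (B.mult X)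

/-- The Yang–Baxter equation `σT ∘ Sτ ∘ λR = Rλ ∘ τS ∘ Tσ` for laws
`l : TS ⇒ ST`, `s : SR ⇒ RS`, `t : TR ⇒ RT`. -/
def YangBaxter (Rm Sm Tm : MonadData C)
    (l : (Sm.F ⋙ Tm.F) ⟶ (Tm.F ⋙ Sm.F))
    (s : (Rm.F ⋙ Sm.F) ⟶ (Sm.F ⋙ Rm.F))
    (t : (Rm.F ⋙ Tm.F) ⟶ (Tm.F ⋙ Rm.F)) : Prop :=
  ∀ X : C, l.app (Rm.F.obj X) ≫ Sm.F.map (t.app X) ≫ s.app (Tm.F.obj X) =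
    Tm.F.map (s.app X) ≫ t.app (Sm.F.obj X) ≫ Rm.F.map (l.app X)

/-- The composite monad data `S ∘_λ T = (ST, η^S η^T, μ^S μ^T ∘ SλT)` of a distributive law. -/
def compData (A B : MonadData C) (l : (A.F ⋙ B.F) ⟶ (B.F ⋙ A.F)) : MonadData C where
  F := B.F ⋙ A.F
  unit X := B.unit X ≫ A.unit (B.F.obj X)
  mult X := A.F.map (l.app (B.F.obj X)) ≫ A.F.map (A.F.map (B.mult X)) ≫ A.mult (B.F.obj X)

/-- The weak composite monad data `S •_λ T` built from a splitting `(K, p, i)` of `κ`. -/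
def wcompData (A B : MonadData C) (l : (A.F ⋙ B.F) ⟶ (B.F ⋙ A.F))
    (K : C ⥤ C) (p : (B.F ⋙ A.F) ⟶ K) (i : K ⟶ (B.F ⋙ A.F)) : MonadData C where
  F := K
  unit X := B.unit X ≫ A.unit (B.F.obj X) ≫ p.app X
  mult X := i.app (K.obj X) ≫ A.F.map (B.F.map (i.app X)) ≫ A.F.map (l.app (B.F.obj X)) ≫
    A.F.map (A.F.map (B.mult X)) ≫ A.mult (B.F.obj X) ≫ p.app X

section Cheng

variable {C : Type u} [Category.{v} C] (R S T : Monad C)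

/-- The first composite law `Rλ ∘ τS : T(RS) ⇒ (RS)T`. -/
def chengPhi (l : (S.toFunctor ⋙ T.toFunctor) ⟶ (T.toFunctor ⋙ S.toFunctor))
    (t : (R.toFunctor ⋙ T.toFunctor) ⟶ (T.toFunctor ⋙ R.toFunctor)) :
    ((S.toFunctor ⋙ R.toFunctor) ⋙ T.toFunctor) ⟶
      (T.toFunctor ⋙ (S.toFunctor ⋙ R.toFunctor)) :=
  Functor.whiskerLeft S.toFunctor t ≫ Functor.whiskerRight l R.toFunctor

/-- The second composite law `σT ∘ Sτ : (ST)R ⇒ R(ST)`. -/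
def chengPsi (s : (R.toFunctor ⋙ S.toFunctor) ⟶ (S.toFunctor ⋙ R.toFunctor))
    (t : (R.toFunctor ⋙ T.toFunctor) ⟶ (T.toFunctor ⋙ R.toFunctor)) :
    (R.toFunctor ⋙ (T.toFunctor ⋙ S.toFunctor)) ⟶
      ((T.toFunctor ⋙ S.toFunctor) ⋙ R.toFunctor) :=
  Functor.whiskerRight t S.toFunctor ≫ Functor.whiskerLeft T.toFunctor s

/-- Cheng's theorem for three monads. Given distributive laws
`λ : TS ⇒ ST`, `σ : SR ⇒ RS`, `τ : TR ⇒ RT` satisfying the Yang–Baxter equation: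
(1) `Rλ ∘ τS` is a distributive law of `R ∘_σ S` over `T`;
(2) `σT ∘ Sτ` is a distributive law of `R` over `S ∘_λ T`;
(3) the two composite monads coincide: both have underlying functor `RST`, unit
`η^R η^S η^T`, and the same multiplication. -/
theorem cheng
    (l : (S.toFunctor ⋙ T.toFunctor) ⟶ (T.toFunctor ⋙ S.toFunctor))
    (s : (R.toFunctor ⋙ S.toFunctor) ⟶ (S.toFunctor ⋙ R.toFunctor))
    (t : (R.toFunctor ⋙ T.toFunctor) ⟶ (T.toFunctor ⋙ R.toFunctor))
    (hl : IsDL S.data T.data l) (hs : IsDL R.data S.data s) (ht : IsDL R.data T.data t)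
    (yb : YangBaxter R.data S.data T.data l s t) :
    IsDL (compData R.data S.data s) T.data (chengPhi R S T l t) ∧
    IsDL R.data (compData S.data T.data l) (chengPsi R S T s t) ∧
    (∀ X : C, (compData (compData R.data S.data s) T.data (chengPhi R S T l t)).unit X =
      T.η.app X ≫ S.η.app (T.obj X) ≫ R.η.app (S.obj (T.obj X))) ∧
    (∀ X : C, (compData R.data (compData S.data T.data l) (chengPsi R S T s t)).unit X =
      T.η.app X ≫ S.η.app (T.obj X) ≫ R.η.app (S.obj (T.obj X))) ∧
    (∀ X : C, (compData (compData R.data S.data s) T.data (chengPhi R S T l t)).mult X =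
      (compData R.data (compData S.data T.data l) (chengPsi R S T s t)).mult X) := by
  obtain ⟨lep, lmp, lem, lmm⟩ := hl
  obtain ⟨sep, smp, sem, smm⟩ := hs
  obtain ⟨tep, tmp, tem, tmm⟩ := ht
  have lep' : ∀ X : C, T.map (S.η.app X) ≫ l.app X = S.η.app (T.obj X) := lep
  have lmp' : ∀ X : C, T.map (S.μ.app X) ≫ l.app X = l.app (S.obj X) ≫ S.map (l.app X) ≫ S.μ.app (T.obj X) := lmp
  have lem' : ∀ X : C, T.η.app (S.obj X) ≫ l.app X = S.map (T.η.app X) := lem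
  have lmm' : ∀ X : C, T.μ.app (S.obj X) ≫ l.app X = T.map (l.app X) ≫ l.app (T.obj X) ≫ S.map (T.μ.app X) := lmm
  have sep' : ∀ X : C, S.map (R.η.app X) ≫ s.app X = R.η.app (S.obj X) := sep
  have smp' : ∀ X : C, S.map (R.μ.app X) ≫ s.app X = s.app (R.obj X) ≫ R.map (s.app X) ≫ R.μ.app (S.obj X) := smp
  have sem' : ∀ X : C, S.η.app (R.obj X) ≫ s.app X = R.map (S.η.app X) := sem
  have smm' : ∀ X : C, S.μ.app (R.obj X) ≫ s.app X = S.map (s.app X) ≫ s.app (S.obj X) ≫ R.map (S.μ.app X) := smm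
  have tep' : ∀ X : C, T.map (R.η.app X) ≫ t.app X = R.η.app (T.obj X) := tep
  have tmp' : ∀ X : C, T.map (R.μ.app X) ≫ t.app X = t.app (R.obj X) ≫ R.map (t.app X) ≫ R.μ.app (T.obj X) := tmp
  have tem' : ∀ X : C, T.η.app (R.obj X) ≫ t.app X = R.map (T.η.app X) := tem
  have tmm' : ∀ X : C, T.μ.app (R.obj X) ≫ t.app X = T.map (t.app X) ≫ t.app (T.obj X) ≫ R.map (T.μ.app X) := tmm
  have yb' : ∀ X : C, l.app (R.obj X) ≫ S.map (t.app X) ≫ s.app (T.obj X) = T.map (s.app X) ≫ t.app (S.obj X) ≫ R.map (l.app X) := yb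
  have lnat : ∀ {X Y : C} (f : X ⟶ Y), T.map (S.map f) ≫ l.app Y = l.app X ≫ S.map (T.map f) := fun f => l.naturality f
  have snat : ∀ {X Y : C} (f : X ⟶ Y), S.map (R.map f) ≫ s.app Y = s.app X ≫ R.map (S.map f) := fun f => s.naturality f
  have tnat : ∀ {X Y : C} (f : X ⟶ Y), T.map (R.map f) ≫ t.app Y = t.app X ≫ R.map (T.map f) := fun f => t.naturality f
  have ηRnat : ∀ {X Y : C} (f : X ⟶ Y), f ≫ R.η.app Y = R.η.app X ≫ R.map f := fun f => R.η.naturality f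
  have ηSnat : ∀ {X Y : C} (f : X ⟶ Y), f ≫ S.η.app Y = S.η.app X ≫ S.map f := fun f => S.η.naturality f
  have μRnat : ∀ {X Y : C} (f : X ⟶ Y), R.map (R.map f) ≫ R.μ.app Y = R.μ.app X ≫ R.map f := fun f => R.μ.naturality f
  have μSnat : ∀ {X Y : C} (f : X ⟶ Y), S.map (S.map f) ≫ S.μ.app Y = S.μ.app X ≫ S.map f := fun f => S.μ.naturality f
  refine ⟨⟨?_, ?_, ?_, ?_⟩, ⟨?_, ?_, ?_, ?_⟩, ?_, ?_, ?_⟩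
  all_goals intro X
  all_goals dsimp only [compData, chengPhi, chengPsi, Monad.data, NatTrans.comp_app, Functor.whiskerLeft_app, Functor.whiskerRight_app, Functor.comp_obj, Functor.comp_map]
  all_goals (try simp only [Functor.map_comp, Category.assoc])
  -- (1) EtaPlus
  · rw [reassoc_of% tep' (S.obj X), ← ηRnat (X := T.obj (S.obj X)) (Y := S.obj (T.obj X)) (l.app X), reassoc_of% lep' X]
  -- (1) MuPlus
  · have inner2 : T.map (s.app (S.obj X)) ≫ T.map (R.map (S.μ.app X)) ≫ t.app (S.obj X) ≫
        R.map (l.app X) =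
        l.app (R.obj (S.obj X)) ≫ S.map (t.app (S.obj X)) ≫ S.map (R.map (l.app X)) ≫
          s.app (S.obj (T.obj X)) ≫ R.map (S.μ.app (T.obj X)) := by
      rw [reassoc_of% tnat (S.μ.app X)]
      have e : R.map (T.map (S.μ.app X)) ≫ R.map (l.app X) =
          R.map (l.app (S.obj X)) ≫ R.map (S.map (l.app X)) ≫ R.map (S.μ.app (T.obj X)) := by
        simp only [← Functor.map_comp]; rw [lmp' X]
      rw [e, ← reassoc_of% yb' (S.obj X), ← reassoc_of% snat (X := T.obj (S.obj X)) (Y := S.obj (T.obj X)) (l.app X)]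
    have h2 : R.map (T.map (s.app (S.obj X))) ≫ R.map (T.map (R.map (S.μ.app X))) ≫
        R.map (t.app (S.obj X)) ≫ R.map (R.map (l.app X)) =
        R.map (l.app (R.obj (S.obj X))) ≫ R.map (S.map (t.app (S.obj X))) ≫
          R.map (S.map (R.map (l.app X))) ≫ R.map (s.app (S.obj (T.obj X))) ≫
          R.map (R.map (S.μ.app (T.obj X))) := by
      simp only [← Functor.map_comp]
      apply congrArg
      try simp only [Functor.map_comp, Category.assoc]
      exact inner2
    rw [reassoc_of% tmp' (S.obj X), ← μRnat (X := T.obj (S.obj X)) (Y := S.obj (T.obj X)) (l.app X),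
      reassoc_of% tnat (R.map (S.μ.app X)), reassoc_of% tnat (X := S.obj (R.obj (S.obj X))) (Y := R.obj (S.obj (S.obj X))) (s.app (S.obj X)),
      reassoc_of% h2]
  -- (1) EtaMinus
  · rw [reassoc_of% tem' (S.obj X), ← Functor.map_comp, lem' X]
  -- (1) MuMinus
  · have h4 : R.map (T.μ.app (S.obj X)) ≫ R.map (l.app X) =
        R.map (T.map (l.app X)) ≫ R.map (l.app (T.obj X)) ≫ R.map (S.map (T.μ.app X)) := by
      simp only [← Functor.map_comp]; rw [lmm' X]
    rw [reassoc_of% tmm' (S.obj X), h4, ← reassoc_of% tnat (X := T.obj (S.obj X)) (Y := S.obj (T.obj X)) (l.app X)]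
  -- (2) EtaPlus
  · have h5 : S.map (T.map (R.η.app X)) ≫ S.map (t.app X) = S.map (R.η.app (T.obj X)) := by
      simp only [← Functor.map_comp]; rw [tep' X]
    rw [reassoc_of% h5, sep' (T.obj X)]
  -- (2) MuPlus
  · have h6 : S.map (T.map (R.μ.app X)) ≫ S.map (t.app X) =
        S.map (t.app (R.obj X)) ≫ S.map (R.map (t.app X)) ≫ S.map (R.μ.app (T.obj X)) := by
      simp only [← Functor.map_comp]; rw [tmp' X]
    rw [reassoc_of% h6, smp' (T.obj X), reassoc_of% snat (X := T.obj (R.obj X)) (Y := R.obj (T.obj X)) (t.app X)]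
  -- (2) EtaMinus
  · rw [← reassoc_of% ηSnat (X := T.obj (R.obj X)) (Y := R.obj (T.obj X)) (t.app X), reassoc_of% tem' X, sem' (T.obj X)]
  -- (2) MuMinus
  · have inner8 : l.app (T.obj (R.obj X)) ≫ S.map (T.μ.app (R.obj X)) ≫ S.map (t.app X) ≫
        s.app (T.obj X) =
        T.map (S.map (t.app X)) ≫ T.map (s.app (T.obj X)) ≫ t.app (S.obj (T.obj X)) ≫
          R.map (l.app (T.obj X)) ≫ R.map (S.map (T.μ.app X)) := by
      have e : S.map (T.μ.app (R.obj X)) ≫ S.map (t.app X) =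
          S.map (T.map (t.app X)) ≫ S.map (t.app (T.obj X)) ≫ S.map (R.map (T.μ.app X)) := by
        simp only [← Functor.map_comp]; rw [tmm' X]
      rw [reassoc_of% e, snat (X := T.obj (T.obj X)) (Y := T.obj X) (T.μ.app X), ← reassoc_of% lnat (X := T.obj (R.obj X)) (Y := R.obj (T.obj X)) (t.app X),
        reassoc_of% yb' (T.obj X)]
    have h8 : S.map (l.app (T.obj (R.obj X))) ≫ S.map (S.map (T.μ.app (R.obj X))) ≫
        S.map (S.map (t.app X)) ≫ S.map (s.app (T.obj X)) =
        S.map (T.map (S.map (t.app X))) ≫ S.map (T.map (s.app (T.obj X))) ≫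
          S.map (t.app (S.obj (T.obj X))) ≫ S.map (R.map (l.app (T.obj X))) ≫
          S.map (R.map (S.map (T.μ.app X))) := by
      simp only [← Functor.map_comp]
      apply congrArg
      try simp only [Functor.map_comp, Category.assoc]
      exact inner8
    rw [← reassoc_of% μSnat (X := T.obj (R.obj X)) (Y := R.obj (T.obj X)) (t.app X), smm' (T.obj X), reassoc_of% h8,
      reassoc_of% snat (X := S.obj (T.obj (T.obj X))) (Y := S.obj (T.obj X)) (S.map (T.μ.app X)), reassoc_of% snat (X := T.obj (S.obj (T.obj X))) (Y := S.obj (T.obj (T.obj X))) (l.app (T.obj X))]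
  -- multiplication equality
  · have h11 : R.map (S.map (R.map (l.app (T.obj X)))) ≫
        R.map (S.map (R.map (S.map (T.μ.app X)))) ≫ R.map (s.app (S.obj (T.obj X))) =
        R.map (s.app (T.obj (S.obj (T.obj X)))) ≫ R.map (R.map (S.map (l.app (T.obj X)))) ≫
          R.map (R.map (S.map (S.map (T.μ.app X)))) := by
      simp only [← Functor.map_comp]
      apply congrArg
      try simp only [Functor.map_comp, Category.assoc]
      rw [snat (X := S.obj (T.obj (T.obj X))) (Y := S.obj (T.obj X)) (S.map (T.μ.app X)), reassoc_of% snat (X := T.obj (S.obj (T.obj X))) (Y := S.obj (T.obj (T.obj X))) (l.app (T.obj X))]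
    rw [reassoc_of% h11]


end Cheng
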